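/- Jensen-Shannon divergence admits the variational characterization JSD(P,Q) = log 2 − inf_{f : X → [0,1]} L(f,P,Q), where L is the binary cross-entropy loss, and the infimum is attained at f*(x) = P(x)/(P(x)+Q(x)) (density ratio w.r.t. the mixture M = (P+Q)/2). -/

import Mathlib

open MeasureTheory ENNReal

noncomputable def jsdL1 (t : ℝ) : ℝ≥0∞ :=
  if t = 0 then ⊤ else ENNReal.ofReal (-Real.log t)

noncomputable def jsdL2 (t : ℝ) : ℝ≥0∞ :=
  if t = 1 then ⊤ else ENNReal.ofReal (-Real.log (1 - t))

lemma measurable_jsdL1 {X : Type*} [MeasurableSpace X] {f : X → ℝ} (hf : Measurable f) :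
    Measurable fun x => jsdL1 (f x) := by
  simp only [jsdL1]
  exact Measurable.ite (hf (measurableSet_singleton 0)) measurable_const
    (ENNReal.measurable_ofReal.comp (Real.measurable_log.comp hf).neg)

lemma measurable_jsdL2 {X : Type*} [MeasurableSpace X] {f : X → ℝ} (hf : Measurable f) :
    Measurable fun x => jsdL2 (f x) := by
  simp only [jsdL2]
  exact Measurable.ite (hf (measurableSet_singleton 1)) measurable_const
    (ENNReal.measurable_ofReal.comp (Real.measurable_log.comp (measurable_const.sub hf)).neg)

lemma jsd_real_key {A B t : ℝ} (hA : 0 < A) (hB : 0 < B) (ht0 : 0 < t) (ht1 : t < 1) :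
    A * (-Real.log (A / (A + B))) + B * (-Real.log (B / (A + B)))
      ≤ A * (-Real.log t) + B * (-Real.log (1 - t)) := by
  have hs : 0 < A + B := by linarith
  have h1 : Real.log (t * (A + B) / A) ≤ t * (A + B) / A - 1 :=
    Real.log_le_sub_one_of_pos (div_pos (mul_pos ht0 hs) hA)
  have h2 : Real.log ((1 - t) * (A + B) / B) ≤ (1 - t) * (A + B) / B - 1 :=
    Real.log_le_sub_one_of_pos (div_pos (mul_pos (by linarith) hs) hB)
  have e1 : Real.log (t * (A + B) / A) = Real.log t - Real.log (A / (A + B)) := by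
    rw [Real.log_div (mul_pos ht0 hs).ne' (ne_of_gt hA), Real.log_mul (ne_of_gt ht0) (ne_of_gt hs),
      Real.log_div (ne_of_gt hA) (ne_of_gt hs)]
    ring
  have e2 : Real.log ((1 - t) * (A + B) / B) = Real.log (1 - t) - Real.log (B / (A + B)) := by
    rw [Real.log_div (mul_pos (by linarith) hs).ne' (ne_of_gt hB),
      Real.log_mul (by linarith : (0:ℝ) < 1 - t).ne' (ne_of_gt hs),
      Real.log_div (ne_of_gt hB) (ne_of_gt hs)]
    ring
  rw [e1] at h1; rw [e2] at h2
  have h1' := mul_le_mul_of_nonneg_left h1 hA.le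
  have h2' := mul_le_mul_of_nonneg_left h2 hB.le
  have k1 : A * (t * (A + B) / A - 1) = t * (A + B) - A := by field_simp
  have k2 : B * ((1 - t) * (A + B) / B - 1) = (1 - t) * (A + B) - B := by field_simp
  rw [k1] at h1'; rw [k2] at h2'
  nlinarith [h1', h2']

lemma jsd_enn_key {A B t : ℝ} (hA : 0 ≤ A) (hB : 0 ≤ B) (ht0 : 0 ≤ t) (ht1 : t ≤ 1) :
    ENNReal.ofReal A * jsdL1 (A / (A + B)) + ENNReal.ofReal B * jsdL2 (A / (A + B))
      ≤ ENNReal.ofReal A * jsdL1 t + ENNReal.ofReal B * jsdL2 t := by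
  rcases eq_or_lt_of_le hA with rfl | hA
  · have h0 : (0 : ℝ) / (0 + B) = 0 := by simp
    rw [h0]
    simp [jsdL1, jsdL2]
  rcases eq_or_lt_of_le hB with rfl | hB
  · have h1 : A / (A + 0) = 1 := by rw [add_zero, div_self (ne_of_gt hA)]
    rw [h1]
    simp [jsdL1, jsdL2]
  have hs : 0 < A + B := by linarith
  have hts0 : 0 < A / (A + B) := div_pos hA hs
  have hts1 : A / (A + B) < 1 := (div_lt_one hs).2 (by linarith)
  have h1s : 1 - A / (A + B) = B / (A + B) := by field_simp; ring
  have hL1 : jsdL1 (A / (A + B)) = ENNReal.ofReal (-Real.log (A / (A + B))) := by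
    simp only [jsdL1]; rw [if_neg (ne_of_gt hts0)]
  have hL2 : jsdL2 (A / (A + B)) = ENNReal.ofReal (-Real.log (B / (A + B))) := by
    simp only [jsdL2]; rw [if_neg (ne_of_lt hts1), h1s]
  rcases eq_or_lt_of_le ht0 with rfl | ht0
  · have hT : ENNReal.ofReal A * jsdL1 0 = ⊤ := by
      simp only [jsdL1, if_pos rfl]
      exact ENNReal.mul_top (ENNReal.ofReal_pos.2 hA).ne'
    rw [hT, top_add]
    exact le_top
  rcases eq_or_lt_of_le ht1 with rfl | ht1
  · have hT : ENNReal.ofReal B * jsdL2 1 = ⊤ := by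
      simp only [jsdL2, if_pos rfl]
      exact ENNReal.mul_top (ENNReal.ofReal_pos.2 hB).ne'
    rw [hT, add_top]
    exact le_top
  have hR1 : jsdL1 t = ENNReal.ofReal (-Real.log t) := by
    simp only [jsdL1]; rw [if_neg (ne_of_gt ht0)]
  have hR2 : jsdL2 t = ENNReal.ofReal (-Real.log (1 - t)) := by
    simp only [jsdL2]; rw [if_neg (ne_of_lt ht1)]
  have n1 : 0 ≤ A * (-Real.log (A / (A + B))) :=
    mul_nonneg hA.le (neg_nonneg.2 (Real.log_nonpos hts0.le hts1.le))
  have n2 : 0 ≤ B * (-Real.log (B / (A + B))) :=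
    mul_nonneg hB.le (neg_nonneg.2 (Real.log_nonpos (by positivity)
      ((div_le_one hs).2 (by linarith))))
  have n3 : 0 ≤ A * (-Real.log t) :=
    mul_nonneg hA.le (neg_nonneg.2 (Real.log_nonpos ht0.le ht1.le))
  have n4 : 0 ≤ B * (-Real.log (1 - t)) :=
    mul_nonneg hB.le (neg_nonneg.2 (Real.log_nonpos (by linarith) (by linarith)))
  rw [hL1, hL2, hR1, hR2, ← ENNReal.ofReal_mul hA.le, ← ENNReal.ofReal_mul hB.le,
    ← ENNReal.ofReal_mul hA.le, ← ENNReal.ofReal_mul hB.le,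
    ← ENNReal.ofReal_add n1 n2, ← ENNReal.ofReal_add n3 n4]
  exact ENNReal.ofReal_le_ofReal (jsd_real_key hA hB ht0 ht1)

lemma jsd_aux_bound {A B : ℝ} (hA : 0 ≤ A) (hB : 0 ≤ B) :
    0 ≤ A * Real.log ((A + B) / A) ∧ A * Real.log ((A + B) / A) ≤ B := by
  rcases eq_or_lt_of_le hA with rfl | hA
  · simp [hB]
  have hs : 0 < A + B := by linarith
  have he : (A + B) / A = 1 + B / A := by field_simp
  constructor
  · exact mul_nonneg hA.le (Real.log_nonneg (by rw [he]; nlinarith [div_nonneg hB hA.le]))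
  · have h1 : Real.log (1 + B / A) ≤ 1 + B / A - 1 :=
      Real.log_le_sub_one_of_pos (by positivity)
    calc A * Real.log ((A + B) / A) = A * Real.log (1 + B / A) := by rw [he]
      _ ≤ A * (B / A) := by
          apply mul_le_mul_of_nonneg_left _ hA.le
          linarith
      _ = B := by field_simp

lemma jsd_aux_log {A B : ℝ} (hA : 0 ≤ A) (hB : 0 ≤ B) :
    A * Real.log (A / ((A + B) / 2)) = Real.log 2 * A - A * Real.log ((A + B) / A) := by
  rcases eq_or_lt_of_le hA with rfl | hA
  · simp
  have hs : 0 < A + B := by linarith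
  have e1 : A / ((A + B) / 2) = 2 * A / (A + B) := by field_simp
  rw [e1, Real.log_div (by positivity) (ne_of_gt hs),
    Real.log_mul (by norm_num) (ne_of_gt hA),
    Real.log_div (ne_of_gt hs) (ne_of_gt hA)]
  ring

/-- Variational characterization of the Jensen-Shannon divergence:
`JSD(P,Q) = log 2 - inf_{f : X → [0,1]} L(f,P,Q)` where `L` is the binary
cross-entropy loss (valued in `[0,∞]`, with `log 0 = -∞`), and the infimum is
attained at the density ratio `f*(x) = p(x) / (p(x) + q(x))`. -/
theorem jsd_variational_characterization
    {X : Type*} [MeasurableSpace X] (μ : Measure X) (p q : X → ℝ≥0∞)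
    (hp : Measurable p) (hq : Measurable q)
    (P Q : Measure X)
    (hP : P = μ.withDensity p) (hQ : Q = μ.withDensity q)
    [IsProbabilityMeasure P] [IsProbabilityMeasure Q]
    (F : Set (X → ℝ)) (hF : F = {f | Measurable f ∧ ∀ x, f x ∈ Set.Icc (0 : ℝ) 1})
    (L : (X → ℝ) → ℝ≥0∞)
    -- binary cross-entropy loss, valued in [0,∞]
    (hL : ∀ f, L f =
        (1 / 2) * ∫⁻ x, (if f x = 0 then ⊤ else ENNReal.ofReal (-Real.log (f x))) ∂P
      + (1 / 2) * ∫⁻ x, (if f x = 1 then ⊤ else ENNReal.ofReal (-Real.log (1 - f x))) ∂Q)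
    (JSD : ℝ)
    -- JSD(P,Q) = (1/2)[KL(P‖M) + KL(Q‖M)] with M = (P+Q)/2, written via densities
    (hJSD : JSD =
        (1 / 2) * ∫ x, (p x).toReal *
            Real.log ((p x).toReal / (((p x).toReal + (q x).toReal) / 2)) ∂μ
      + (1 / 2) * ∫ x, (q x).toReal *
            Real.log ((q x).toReal / (((p x).toReal + (q x).toReal) / 2)) ∂μ)
    (fstar : X → ℝ)
    (hfstar : ∀ x, fstar x = (p x).toReal / ((p x).toReal + (q x).toReal)) :
    sInf (L '' F) = ENNReal.ofReal (Real.log 2 - JSD) ∧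
    L fstar = sInf (L '' F) := by
  subst hP hQ hF
  -- basic facts
  have hPuniv : ∫⁻ x, p x ∂μ = 1 := by
    have h := measure_univ (μ := μ.withDensity p)
    rwa [withDensity_apply _ MeasurableSet.univ, setLIntegral_univ] at h
  have hQuniv : ∫⁻ x, q x ∂μ = 1 := by
    have h := measure_univ (μ := μ.withDensity q)
    rwa [withDensity_apply _ MeasurableSet.univ, setLIntegral_univ] at h
  have hpf : ∀ᵐ x ∂μ, p x < ⊤ := ae_lt_top hp (by rw [hPuniv]; exact one_ne_top)
  have hqf : ∀ᵐ x ∂μ, q x < ⊤ := ae_lt_top hq (by rw [hQuniv]; exact one_ne_top)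
  have hip : Integrable (fun x => (p x).toReal) μ :=
    integrable_toReal_of_lintegral_ne_top hp.aemeasurable (by rw [hPuniv]; exact one_ne_top)
  have hiq : Integrable (fun x => (q x).toReal) μ :=
    integrable_toReal_of_lintegral_ne_top hq.aemeasurable (by rw [hQuniv]; exact one_ne_top)
  have hAint : ∫ x, (p x).toReal ∂μ = 1 := by
    rw [integral_toReal hp.aemeasurable hpf, hPuniv, ENNReal.toReal_one]
  have hBint : ∫ x, (q x).toReal ∂μ = 1 := by
    rw [integral_toReal hq.aemeasurable hqf, hQuniv, ENNReal.toReal_one]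
  set g1 : X → ℝ := fun x =>
    (p x).toReal * Real.log (((p x).toReal + (q x).toReal) / (p x).toReal) with hg1def
  set g2 : X → ℝ := fun x =>
    (q x).toReal * Real.log (((p x).toReal + (q x).toReal) / (q x).toReal) with hg2def
  have hg1b : ∀ x, 0 ≤ g1 x ∧ g1 x ≤ (q x).toReal := fun x =>
    jsd_aux_bound toReal_nonneg toReal_nonneg
  have hg2b : ∀ x, 0 ≤ g2 x ∧ g2 x ≤ (p x).toReal := by
    intro x
    have h := jsd_aux_bound (A := (q x).toReal) (B := (p x).toReal) toReal_nonneg toReal_nonneg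
    rwa [add_comm] at h
  have hg1m : Measurable g1 :=
    (ENNReal.measurable_toReal.comp hp).mul
      (Real.measurable_log.comp (((ENNReal.measurable_toReal.comp hp).add
        (ENNReal.measurable_toReal.comp hq)).div (ENNReal.measurable_toReal.comp hp)))
  have hg2m : Measurable g2 :=
    (ENNReal.measurable_toReal.comp hq).mul
      (Real.measurable_log.comp (((ENNReal.measurable_toReal.comp hp).add
        (ENNReal.measurable_toReal.comp hq)).div (ENNReal.measurable_toReal.comp hq)))
  have hg1int : Integrable g1 μ :=
    hiq.mono' hg1m.aestronglyMeasurable (Filter.Eventually.of_forall fun x => by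
      rw [Real.norm_eq_abs, abs_of_nonneg (hg1b x).1]; exact (hg1b x).2)
  have hg2int : Integrable g2 μ :=
    hip.mono' hg2m.aestronglyMeasurable (Filter.Eventually.of_forall fun x => by
      rw [Real.norm_eq_abs, abs_of_nonneg (hg2b x).1]; exact (hg2b x).2)
  have hfm : Measurable fstar := by
    have h : fstar = fun x => (p x).toReal / ((p x).toReal + (q x).toReal) := funext hfstar
    rw [h]
    exact (ENNReal.measurable_toReal.comp hp).div
      ((ENNReal.measurable_toReal.comp hp).add (ENNReal.measurable_toReal.comp hq))
  -- the two lintegrals at fstar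
  have hI1 : ∫⁻ x, p x * jsdL1 (fstar x) ∂μ = ENNReal.ofReal (∫ x, g1 x ∂μ) := by
    rw [ofReal_integral_eq_lintegral_ofReal hg1int
      (Filter.Eventually.of_forall fun x => (hg1b x).1)]
    apply lintegral_congr_ae
    filter_upwards [hpf, hqf] with x hxp hxq
    by_cases hA : p x = 0
    · rw [hA, zero_mul]
      have hz : g1 x = 0 := by simp [hg1def, hA]
      rw [hz, ENNReal.ofReal_zero]
    · have hA' : 0 < (p x).toReal := toReal_pos hA hxp.ne
      have hs : 0 < (p x).toReal + (q x).toReal := by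
        have := toReal_nonneg (a := q x); linarith
      have hf0 : fstar x ≠ 0 := by rw [hfstar x]; exact (div_pos hA' hs).ne'
      have hjl : jsdL1 (fstar x) = ENNReal.ofReal (-Real.log (fstar x)) := by
        simp only [jsdL1]; rw [if_neg hf0]
      rw [hjl]
      nth_rewrite 1 [← ENNReal.ofReal_toReal hxp.ne]
      rw [← ENNReal.ofReal_mul toReal_nonneg]
      congr 1
      rw [hfstar x]
      have hneg : -Real.log ((p x).toReal / ((p x).toReal + (q x).toReal)) =
          Real.log (((p x).toReal + (q x).toReal) / (p x).toReal) := by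
        rw [← Real.log_inv, inv_div]
      rw [hneg]
  have hI2 : ∫⁻ x, q x * jsdL2 (fstar x) ∂μ = ENNReal.ofReal (∫ x, g2 x ∂μ) := by
    rw [ofReal_integral_eq_lintegral_ofReal hg2int
      (Filter.Eventually.of_forall fun x => (hg2b x).1)]
    apply lintegral_congr_ae
    filter_upwards [hpf, hqf] with x hxp hxq
    by_cases hB : q x = 0
    · rw [hB, zero_mul]
      have hz : g2 x = 0 := by simp [hg2def, hB]
      rw [hz, ENNReal.ofReal_zero]
    · have hB' : 0 < (q x).toReal := toReal_pos hB hxq.ne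
      have hs : 0 < (p x).toReal + (q x).toReal := by
        have := toReal_nonneg (a := p x); linarith
      have hf1 : fstar x ≠ 1 := by
        rw [hfstar x]
        exact ne_of_lt ((div_lt_one hs).2 (by linarith))
      have h1s : 1 - fstar x = (q x).toReal / ((p x).toReal + (q x).toReal) := by
        rw [hfstar x]; field_simp; ring
      have hjl : jsdL2 (fstar x) = ENNReal.ofReal
          (Real.log (((p x).toReal + (q x).toReal) / (q x).toReal)) := by
        simp only [jsdL2]
        rw [if_neg hf1, h1s, ← Real.log_inv, inv_div]
      rw [hjl]
      nth_rewrite 1 [← ENNReal.ofReal_toReal hxq.ne]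
      rw [← ENNReal.ofReal_mul toReal_nonneg]
  -- JSD in terms of g1, g2
  have hJ1 : ∫ x, (p x).toReal *
      Real.log ((p x).toReal / (((p x).toReal + (q x).toReal) / 2)) ∂μ
      = Real.log 2 - ∫ x, g1 x ∂μ := by
    rw [integral_congr_ae (Filter.Eventually.of_forall (fun x =>
      jsd_aux_log toReal_nonneg toReal_nonneg))]
    rw [integral_sub ((hip.const_mul (Real.log 2)).congr
      (Filter.Eventually.of_forall fun x => by ring)) hg1int]
    rw [integral_const_mul, hAint, mul_one]
  have hJ2 : ∫ x, (q x).toReal *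
      Real.log ((q x).toReal / (((p x).toReal + (q x).toReal) / 2)) ∂μ
      = Real.log 2 - ∫ x, g2 x ∂μ := by
    have hpt : ∀ x, (q x).toReal *
        Real.log ((q x).toReal / (((p x).toReal + (q x).toReal) / 2))
        = Real.log 2 * (q x).toReal - g2 x := by
      intro x
      have h := jsd_aux_log (A := (q x).toReal) (B := (p x).toReal) toReal_nonneg toReal_nonneg
      rwa [add_comm ((q x).toReal) ((p x).toReal)] at h
    rw [integral_congr_ae (Filter.Eventually.of_forall hpt)]
    rw [integral_sub ((hiq.const_mul (Real.log 2)).congr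
      (Filter.Eventually.of_forall fun x => by ring)) hg2int]
    rw [integral_const_mul, hBint, mul_one]
  have hJval : Real.log 2 - JSD = (1 / 2) * ∫ x, g1 x ∂μ + (1 / 2) * ∫ x, g2 x ∂μ := by
    rw [hJSD, hJ1, hJ2]; ring
  have hint1nn : 0 ≤ ∫ x, g1 x ∂μ := integral_nonneg fun x => (hg1b x).1
  have hint2nn : 0 ≤ ∫ x, g2 x ∂μ := integral_nonneg fun x => (hg2b x).1
  -- rewrite L
  have hLr : ∀ g : X → ℝ, Measurable g →
      L g = ∫⁻ x, (1 / 2 : ℝ≥0∞) * (p x * jsdL1 (g x) + q x * jsdL2 (g x)) ∂μ := by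
    intro g hg
    have e : L g = (1 / 2) * ∫⁻ x, jsdL1 (g x) ∂(μ.withDensity p)
        + (1 / 2) * ∫⁻ x, jsdL2 (g x) ∂(μ.withDensity q) := hL g
    rw [e, lintegral_withDensity_eq_lintegral_mul μ hp (measurable_jsdL1 hg),
      lintegral_withDensity_eq_lintegral_mul μ hq (measurable_jsdL2 hg)]
    simp only [Pi.mul_apply]
    rw [← lintegral_const_mul _ (f := fun x => p x * jsdL1 (g x)) (hp.mul (measurable_jsdL1 hg)),
      ← lintegral_const_mul _ (f := fun x => q x * jsdL2 (g x)) (hq.mul (measurable_jsdL2 hg)),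
      ← lintegral_add_left (f := fun x => (1 / 2 : ℝ≥0∞) * (p x * jsdL1 (g x)))
        ((hp.mul (measurable_jsdL1 hg)).const_mul _)]
    exact lintegral_congr fun x => by rw [mul_add]
  -- value at fstar
  have hLfstar : L fstar = ENNReal.ofReal (Real.log 2 - JSD) := by
    have e : L fstar = (1 / 2) * ∫⁻ x, jsdL1 (fstar x) ∂(μ.withDensity p)
        + (1 / 2) * ∫⁻ x, jsdL2 (fstar x) ∂(μ.withDensity q) := hL fstar
    rw [e, lintegral_withDensity_eq_lintegral_mul μ hp (measurable_jsdL1 hfm),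
      lintegral_withDensity_eq_lintegral_mul μ hq (measurable_jsdL2 hfm)]
    have e1 : ∫⁻ x, (p * fun x => jsdL1 (fstar x)) x ∂μ = ENNReal.ofReal (∫ x, g1 x ∂μ) := by
      rw [← hI1]; exact lintegral_congr fun x => by simp [Pi.mul_apply]
    have e2 : ∫⁻ x, (q * fun x => jsdL2 (fstar x)) x ∂μ = ENNReal.ofReal (∫ x, g2 x ∂μ) := by
      rw [← hI2]; exact lintegral_congr fun x => by simp [Pi.mul_apply]
    rw [e1, e2]
    have h2 : (1 / 2 : ℝ≥0∞) = ENNReal.ofReal (1 / 2) := by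
      rw [ENNReal.ofReal_div_of_pos (by norm_num)]
      norm_num
    rw [h2, ← ENNReal.ofReal_mul (by norm_num), ← ENNReal.ofReal_mul (by norm_num),
      ← ENNReal.ofReal_add (by positivity) (by positivity)]
    congr 1
    rw [hJval]
  -- fstar is admissible
  have hfstarF : fstar ∈ {f : X → ℝ | Measurable f ∧ ∀ x, f x ∈ Set.Icc (0 : ℝ) 1} := by
    refine ⟨hfm, fun x => ?_⟩
    rw [hfstar x]
    constructor
    · exact div_nonneg toReal_nonneg (by positivity)
    · exact div_le_one_of_le₀ (by nlinarith [toReal_nonneg (a := q x)]) (by positivity)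
  -- minimality
  have hmin : ∀ f ∈ {f : X → ℝ | Measurable f ∧ ∀ x, f x ∈ Set.Icc (0 : ℝ) 1},
      L fstar ≤ L f := by
    rintro f ⟨hfm', hfI⟩
    rw [hLr fstar hfm, hLr f hfm']
    refine lintegral_mono_ae ?_
    filter_upwards [hpf, hqf] with x hxp hxq
    refine mul_le_mul_right ?_ _
    have h := jsd_enn_key (A := (p x).toReal) (B := (q x).toReal) toReal_nonneg toReal_nonneg
      (hfI x).1 (hfI x).2
    rwa [ENNReal.ofReal_toReal hxp.ne, ENNReal.ofReal_toReal hxq.ne, ← hfstar x] at h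
  have hinf : sInf (L '' {f : X → ℝ | Measurable f ∧ ∀ x, f x ∈ Set.Icc (0 : ℝ) 1}) = L fstar :=
    le_antisymm (sInf_le ⟨fstar, hfstarF, rfl⟩)
      (le_sInf (by rintro b ⟨f, hfF, rfl⟩; exact hmin f hfF))
  exact ⟨by rw [hinf, hLfstar], hinf.symm⟩
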